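/- Let Ω ⊆ ℝ^N be open and bounded, p ∈ (2,∞), and u, v, w ∈ W^{1,p}(Ω). Then lim_{s→0} (𝔞_{p,Ω}(u+sv, w) − 𝔞_{p,Ω}(u, w))/s = 𝔟_{p,Ω}(u,v,w), where 𝔟_{p,Ω}(u,v,w) = (p−1)∫ |u|^{p-2} v w + (p−2)∫ |∇u|^{p-4} ⟨∇u,∇v⟩⟨∇u,∇w⟩ + ∫ |∇u|^{p-2} ⟨∇v,∇w⟩. -/

import Mathlib

open MeasureTheory Metric
open scoped RealInnerProductSpace

private lemma hasDerivAt_abs_rpow_mul_self {q : ℝ} (hq : 0 < q) (t : ℝ) :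
    HasDerivAt (fun t : ℝ => |t| ^ q * t) ((q + 1) * |t| ^ q) t := by
  rcases lt_trichotomy t 0 with ht | rfl | ht
  · have h1 : HasDerivAt (fun s : ℝ => -s) (-1 : ℝ) t := (hasDerivAt_id t).neg
    have h2 : HasDerivAt (fun s : ℝ => (-s) ^ (q + 1)) ((q + 1) * (-t) ^ (q + 1 - 1) * (-1)) t :=
      (Real.hasDerivAt_rpow_const (p := q + 1) (Or.inl (by linarith))).comp t h1
    have h3 : HasDerivAt (fun s : ℝ => -((-s) ^ (q + 1)))
        (-((q + 1) * (-t) ^ (q + 1 - 1) * (-1))) t := h2.neg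
    have heq : (fun s : ℝ => -((-s) ^ (q + 1))) =ᶠ[nhds t] (fun s : ℝ => |s| ^ q * s) := by
      filter_upwards [Iio_mem_nhds ht] with s hs
      have hs' : (0:ℝ) < -s := by simpa using hs
      rw [abs_of_neg hs, Real.rpow_add_one (by linarith : -s ≠ 0)]
      ring
    have := h3.congr_of_eventuallyEq heq.symm
    refine this.congr_deriv ?_
    rw [abs_of_neg ht]
    ring_nf
  · rw [hasDerivAt_iff_tendsto_slope]
    have habs : Filter.Tendsto (fun s : ℝ => |s| ^ q) (nhds 0) (nhds ((q + 1) * |(0:ℝ)| ^ q)) := by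
      have : Filter.Tendsto (fun s : ℝ => |s| ^ q) (nhds 0) (nhds (|(0:ℝ)| ^ q)) :=
        ((Real.continuous_rpow_const hq.le).comp continuous_abs).tendsto 0
      simpa [abs_zero, Real.zero_rpow hq.ne'] using this
    refine Filter.Tendsto.congr' ?_ (habs.mono_left nhdsWithin_le_nhds)
    filter_upwards [self_mem_nhdsWithin] with s hs
    have hs0 : s ≠ 0 := hs
    simp only [slope_def_field, sub_zero, mul_zero, abs_zero]
    rw [mul_div_assoc, div_self hs0, mul_one]
  · have h2 : HasDerivAt (fun s : ℝ => s ^ (q + 1)) ((q + 1) * t ^ (q + 1 - 1)) t :=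
      Real.hasDerivAt_rpow_const (p := q + 1) (Or.inl (by linarith))
    have heq : (fun s : ℝ => s ^ (q + 1)) =ᶠ[nhds t] (fun s : ℝ => |s| ^ q * s) := by
      filter_upwards [Ioi_mem_nhds ht] with s hs
      have hs' : (0:ℝ) < s := hs
      rw [abs_of_pos hs', Real.rpow_add_one hs'.ne']
    have := h2.congr_of_eventuallyEq heq.symm
    refine this.congr_deriv ?_
    rw [abs_of_pos ht]
    ring_nf


private 
lemma rpow_prod_le {q a b c d : ℝ} (hq : 0 ≤ q) (ha : 0 ≤ a) (had : a ≤ d)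
    (hb : 0 ≤ b) (hbd : b ≤ d) (hc : 0 ≤ c) (hcd : c ≤ d) :
    a ^ q * b * c ≤ d ^ (q + 2) := by
  have hd : 0 ≤ d := ha.trans had
  rcases hd.eq_or_lt with h0 | hd0
  · have hb0 : b = 0 := le_antisymm (hbd.trans h0.symm.le) hb
    rw [hb0, mul_zero, zero_mul, ← h0, Real.zero_rpow (by linarith)]
  · calc a ^ q * b * c ≤ d ^ q * d * d := by
          gcongr
      _ = d ^ (q + 2) := by
          rw [show q + 2 = q + 1 + 1 by ring, Real.rpow_add_one hd0.ne',
            Real.rpow_add_one hd0.ne']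

private lemma inner_prod_rpow_bound {E : Type*} [NormedAddCommGroup E] [InnerProductSpace ℝ E]
    {q : ℝ} (hq : 0 < q) (y b c : E) :
    |‖y‖ ^ (q - 2) * ⟪y, b⟫ * ⟪y, c⟫| ≤ ‖y‖ ^ q * ‖b‖ * ‖c‖ := by
  rcases eq_or_ne y 0 with rfl | hy
  · simp [Real.zero_rpow hq.ne']
  · have hy0 : (0:ℝ) < ‖y‖ := norm_pos_iff.mpr hy
    have h1 : 0 ≤ ‖y‖ ^ (q - 2) := Real.rpow_nonneg hy0.le _
    calc |‖y‖ ^ (q - 2) * ⟪y, b⟫ * ⟪y, c⟫|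
        = ‖y‖ ^ (q - 2) * |⟪y, b⟫| * |⟪y, c⟫| := by
          rw [abs_mul, abs_mul, abs_of_nonneg h1]
      _ ≤ ‖y‖ ^ (q - 2) * (‖y‖ * ‖b‖) * (‖y‖ * ‖c‖) := by
          gcongr
          · exact abs_real_inner_le_norm _ _
          · exact abs_real_inner_le_norm _ _
      _ = (‖y‖ ^ (q - 2) * ‖y‖ * ‖y‖) * ‖b‖ * ‖c‖ := by ring
      _ = ‖y‖ ^ q * ‖b‖ * ‖c‖ := by
          rw [show q = q - 2 + 1 + 1 by ring, Real.rpow_add_one hy0.ne',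
            Real.rpow_add_one hy0.ne']
          ring_nf


private lemma hasDerivAt_norm_rpow_inner {E : Type*} [NormedAddCommGroup E] [InnerProductSpace ℝ E]
    {q : ℝ} (hq : 0 < q) (a b c : E) (s : ℝ) :
    HasDerivAt (fun s : ℝ => ‖a + s • b‖ ^ q * ⟪a + s • b, c⟫)
      (q * (‖a + s • b‖ ^ (q - 2) * ⟪a + s • b, b⟫ * ⟪a + s • b, c⟫)
        + ‖a + s • b‖ ^ q * ⟪b, c⟫) s := by
  have hg : HasDerivAt (fun s : ℝ => a + s • b) b s := by
    simpa using ((hasDerivAt_id s).smul_const b).const_add a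
  set y := a + s • b with hy
  rcases eq_or_ne y 0 with h0 | hne
  · -- degenerate case: a + s•b = 0, so a = -s•b
    have ha : a = -(s • b) := by
      have := h0
      rw [hy] at this
      linear_combination (norm := module) this
    have hfun : (fun t : ℝ => ‖a + t • b‖ ^ q * ⟪a + t • b, c⟫)
        = fun t : ℝ => (|t - s| ^ q * (t - s)) * (‖b‖ ^ q * ⟪b, c⟫) := by
      funext t
      have hab : a + t • b = (t - s) • b := by
        rw [ha, sub_smul]; module
      rw [hab, norm_smul, Real.norm_eq_abs, Real.mul_rpow (abs_nonneg _) (norm_nonneg _),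
        real_inner_smul_left]
      ring
    have h1 : HasDerivAt (fun t : ℝ => |t - s| ^ q * (t - s))
        ((q + 1) * |(0:ℝ)| ^ q) s := by
      have h := HasDerivAt.comp_sub_const (f := fun t : ℝ => |t| ^ q * t)
        (f' := (q + 1) * |s - s| ^ q) s s (by simpa using hasDerivAt_abs_rpow_mul_self hq 0)
      simpa [sub_self] using h
    have h2 := h1.mul_const (‖b‖ ^ q * ⟪b, c⟫)
    rw [hfun]
    refine h2.congr_deriv ?_
    rw [h0]
    simp [Real.zero_rpow hq.ne']
  · -- nondegenerate case
    have hypos : 0 < ‖y‖ := norm_pos_iff.mpr hne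
    have hinner_pos : (0:ℝ) < ⟪y, y⟫ := by
      rw [real_inner_self_eq_norm_sq]; exact pow_pos hypos 2
    have hgg : HasDerivAt (fun t : ℝ => ⟪a + t • b, a + t • b⟫) (⟪y, b⟫ + ⟪b, y⟫) s :=
      hg.inner ℝ hg
    have hr : HasDerivAt (fun t : ℝ => ⟪a + t • b, a + t • b⟫ ^ (q / 2))
        ((q / 2) * ⟪y, y⟫ ^ (q / 2 - 1) * (⟪y, b⟫ + ⟪b, y⟫)) s := by
      have := (Real.hasDerivAt_rpow_const (p := q / 2) (x := ⟪y, y⟫)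
        (Or.inl hinner_pos.ne')).comp s hgg
      exact this
    have hi : HasDerivAt (fun t : ℝ => ⟪a + t • b, c⟫) ⟪b, c⟫ s := by
      simpa using hg.inner ℝ (hasDerivAt_const s c)
    have hprod := hr.mul hi
    have hnormsq : ∀ z : E, ⟪z, z⟫ = ‖z‖ ^ (2:ℝ) := by
      intro z
      rw [real_inner_self_eq_norm_sq, ← Real.rpow_natCast ‖z‖ 2]
      norm_num
    have hpow : ∀ r : ℝ, (fun z : E => ⟪z, z⟫ ^ r) = fun z : E => ‖z‖ ^ (2 * r) := by
      intro r
      funext z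
      rw [hnormsq, ← Real.rpow_mul (norm_nonneg z)]
    have hfun : (fun t : ℝ => ⟪a + t • b, a + t • b⟫ ^ (q / 2) * ⟪a + t • b, c⟫)
        = fun t : ℝ => ‖a + t • b‖ ^ q * ⟪a + t • b, c⟫ := by
      funext t
      rw [hnormsq, ← Real.rpow_mul (norm_nonneg _), show (2:ℝ) * (q / 2) = q by ring]
    simp only [Pi.mul_def] at hprod
    rw [hfun] at hprod
    refine hprod.congr_deriv ?_
    have e1 : ⟪y, y⟫ ^ (q / 2 - 1) = ‖y‖ ^ (q - 2) := by
      rw [hnormsq, ← Real.rpow_mul (norm_nonneg _), show (2:ℝ) * (q / 2 - 1) = q - 2 by ring]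
    have e2 : ⟪y, y⟫ ^ (q / 2) = ‖y‖ ^ q := by
      rw [hnormsq, ← Real.rpow_mul (norm_nonneg _), show (2:ℝ) * (q / 2) = q by ring]
    have e3 : ⟪b, y⟫ = ⟪y, b⟫ := real_inner_comm _ _
    rw [e1, e2, e3, ← hy]
    ring

private lemma part1 {N : ℕ} (p : ℝ) (hp : 2 < p)
    (Ω : Set (EuclideanSpace ℝ (Fin N)))
    (u v w : EuclideanSpace ℝ (Fin N) → ℝ)
    (hu : MemLp u (ENNReal.ofReal p) (volume.restrict Ω))
    (hv : MemLp v (ENNReal.ofReal p) (volume.restrict Ω))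
    (hw : MemLp w (ENNReal.ofReal p) (volume.restrict Ω)) :
    HasDerivAt
      (fun s : ℝ => ∫ x in Ω, |u x + s * v x| ^ (p - 2) * (u x + s * v x) * w x)
      ((p - 1) * ∫ x in Ω, |u x| ^ (p - 2) * v x * w x) 0 := by
  set μ := volume.restrict Ω with hμ
  have hq : 0 < p - 2 := by linarith
  -- integrable bound
  have hM : MemLp (fun x => ‖u x‖ + ‖v x‖ + ‖w x‖) (ENNReal.ofReal p) μ :=
    (hu.norm.add hv.norm).add hw.norm
  have hMp_int : Integrable (fun x => (‖u x‖ + ‖v x‖ + ‖w x‖) ^ p) μ := by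
    have h := hM.norm_rpow (by simp [ENNReal.ofReal_eq_zero]; linarith) ENNReal.ofReal_ne_top
    rw [memLp_one_iff_integrable] at h
    refine h.congr ?_
    filter_upwards with x
    rw [ENNReal.toReal_ofReal (by linarith : (0:ℝ) ≤ p), Real.norm_eq_abs,
      abs_of_nonneg (by positivity)]
  -- measurability for every s
  have hcont : Continuous (fun t : ℝ => |t| ^ (p - 2) * t) :=
    ((Real.continuous_rpow_const hq.le).comp continuous_abs).mul continuous_id
  have hmeas : ∀ s : ℝ, AEStronglyMeasurable
      (fun x => |u x + s * v x| ^ (p - 2) * (u x + s * v x) * w x) μ := by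
    intro s
    have haff : AEStronglyMeasurable (fun x => u x + s * v x) μ :=
      hu.1.add (hv.1.const_mul s)
    exact (hcont.comp_aestronglyMeasurable haff).mul hw.1
  have hmeas' : AEStronglyMeasurable
      (fun x => (p - 2 + 1) * |u x + (0:ℝ) * v x| ^ (p - 2) * v x * w x) μ := by
    have haff : AEStronglyMeasurable (fun x => u x + (0:ℝ) * v x) μ :=
      hu.1.add (hv.1.const_mul 0)
    have hc : Continuous (fun t : ℝ => (p - 2 + 1) * |t| ^ (p - 2)) :=
      continuous_const.mul ((Real.continuous_rpow_const hq.le).comp continuous_abs)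
    exact ((hc.comp_aestronglyMeasurable haff).mul hv.1).mul hw.1
  -- integrability at 0
  have hint0 : Integrable (fun x => |u x + (0:ℝ) * v x| ^ (p - 2) * (u x + (0:ℝ) * v x) * w x) μ := by
    refine Integrable.mono' hMp_int (hmeas 0) ?_
    filter_upwards with x
    have h1 : |u x + (0:ℝ) * v x| = |u x| := by norm_num
    rw [Real.norm_eq_abs, abs_mul, abs_mul,
      abs_of_nonneg (Real.rpow_nonneg (abs_nonneg _) _), h1]
    have := rpow_prod_le (d := ‖u x‖ + ‖v x‖ + ‖w x‖) hq.le (abs_nonneg (u x))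
      (by simp only [Real.norm_eq_abs]; nlinarith [abs_nonneg (u x), abs_nonneg (v x), abs_nonneg (w x)])
      (abs_nonneg (u x))
      (by simp only [Real.norm_eq_abs]; nlinarith [abs_nonneg (u x), abs_nonneg (v x), abs_nonneg (w x)])
      (abs_nonneg (w x))
      (by simp only [Real.norm_eq_abs]; nlinarith [abs_nonneg (u x), abs_nonneg (v x), abs_nonneg (w x)])
    rwa [show p - 2 + 2 = p by ring] at this
  -- bound
  have hbound : ∀ᵐ x ∂μ, ∀ s ∈ ball (0:ℝ) 1,
      ‖(p - 2 + 1) * |u x + s * v x| ^ (p - 2) * v x * w x‖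
        ≤ (p - 1) * ((‖u x‖ + ‖v x‖ + ‖w x‖) ^ p) := by
    filter_upwards with x s hs
    have hs1 : |s| ≤ 1 := by
      have := mem_ball_iff_norm.mp hs
      simp only [sub_zero, Real.norm_eq_abs] at this
      linarith
    have hy : |u x + s * v x| ≤ ‖u x‖ + ‖v x‖ + ‖w x‖ := by
      have h1 : |u x + s * v x| ≤ |u x| + |s * v x| := abs_add_le _ _
      have h2 : |s * v x| = |s| * |v x| := abs_mul _ _
      have h3 : |s| * |v x| ≤ 1 * |v x| := by
        apply mul_le_mul_of_nonneg_right hs1 (abs_nonneg _)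
      simp only [Real.norm_eq_abs]
      have := abs_nonneg (w x)
      linarith
    have key := rpow_prod_le (d := ‖u x‖ + ‖v x‖ + ‖w x‖) hq.le (abs_nonneg (u x + s * v x))
      hy (abs_nonneg (v x))
      (by simp only [Real.norm_eq_abs]; nlinarith [abs_nonneg (u x), abs_nonneg (v x), abs_nonneg (w x)])
      (abs_nonneg (w x))
      (by simp only [Real.norm_eq_abs]; nlinarith [abs_nonneg (u x), abs_nonneg (v x), abs_nonneg (w x)])
    rw [show p - 2 + 2 = p by ring] at key
    have e : ‖(p - 2 + 1) * |u x + s * v x| ^ (p - 2) * v x * w x‖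
        = (p - 1) * (|u x + s * v x| ^ (p - 2) * |v x| * |w x|) := by
      rw [Real.norm_eq_abs, abs_mul, abs_mul, abs_mul,
        abs_of_nonneg (Real.rpow_nonneg (abs_nonneg _) _),
        abs_of_nonneg (by linarith : (0:ℝ) ≤ p - 2 + 1)]
      ring
    rw [e]
    exact mul_le_mul_of_nonneg_left key (by linarith : (0:ℝ) ≤ p - 1)
  -- pointwise differentiability
  have hdiff : ∀ᵐ x ∂μ, ∀ s ∈ ball (0:ℝ) 1,
      HasDerivAt (fun s : ℝ => |u x + s * v x| ^ (p - 2) * (u x + s * v x) * w x)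
        ((p - 2 + 1) * |u x + s * v x| ^ (p - 2) * v x * w x) s := by
    filter_upwards with x s _
    have haff : HasDerivAt (fun s : ℝ => u x + s * v x) (v x) s := by
      simpa using ((hasDerivAt_id s).mul_const (v x)).const_add (u x)
    have h1 := (hasDerivAt_abs_rpow_mul_self hq (u x + s * v x)).comp s haff
    have h2 := h1.mul_const (w x)
    exact h2.congr_deriv (by ring)
  have key := (hasDerivAt_integral_of_dominated_loc_of_deriv_le
    (F := fun s x => |u x + s * v x| ^ (p - 2) * (u x + s * v x) * w x)
    (F' := fun s x => (p - 2 + 1) * |u x + s * v x| ^ (p - 2) * v x * w x)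
    (bound := fun x => (p - 1) * ((‖u x‖ + ‖v x‖ + ‖w x‖) ^ p))
    (ball_mem_nhds 0 one_pos) (Filter.Eventually.of_forall hmeas) hint0 hmeas' hbound
    (hMp_int.const_mul (p - 1)) hdiff).2
  refine key.congr_deriv ?_
  rw [← integral_const_mul]
  refine integral_congr_ae (Filter.Eventually.of_forall fun x => ?_)
  norm_num
  ring

private lemma part2 {N : ℕ} (p : ℝ) (hp : 2 < p)
    (Ω : Set (EuclideanSpace ℝ (Fin N)))
    (Du Dv Dw : EuclideanSpace ℝ (Fin N) → EuclideanSpace ℝ (Fin N))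
    (hDu : MemLp Du (ENNReal.ofReal p) (volume.restrict Ω))
    (hDv : MemLp Dv (ENNReal.ofReal p) (volume.restrict Ω))
    (hDw : MemLp Dw (ENNReal.ofReal p) (volume.restrict Ω)) :
    HasDerivAt
      (fun s : ℝ => ∫ x in Ω, ‖Du x + s • Dv x‖ ^ (p - 2) * ⟪Du x + s • Dv x, Dw x⟫)
      ((p - 2) * (∫ x in Ω, ‖Du x‖ ^ (p - 4) * ⟪Du x, Dv x⟫ * ⟪Du x, Dw x⟫)
        + ∫ x in Ω, ‖Du x‖ ^ (p - 2) * ⟪Dv x, Dw x⟫) 0 := by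
  set μ := volume.restrict Ω with hμ
  have hq : 0 < p - 2 := by linarith
  have hM : MemLp (fun x => ‖Du x‖ + ‖Dv x‖ + ‖Dw x‖) (ENNReal.ofReal p) μ :=
    (hDu.norm.add hDv.norm).add hDw.norm
  have hMp_int : Integrable (fun x => (‖Du x‖ + ‖Dv x‖ + ‖Dw x‖) ^ p) μ := by
    have h := hM.norm_rpow (by simp [ENNReal.ofReal_eq_zero]; linarith) ENNReal.ofReal_ne_top
    rw [memLp_one_iff_integrable] at h
    refine h.congr ?_
    filter_upwards with x
    rw [ENNReal.toReal_ofReal (by linarith : (0:ℝ) ≤ p), Real.norm_eq_abs,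
      abs_of_nonneg (by positivity)]
  -- ae-measurability of the affine family
  have haff : ∀ s : ℝ, AEStronglyMeasurable (fun x => Du x + s • Dv x) μ := fun s =>
    hDu.1.add (hDv.1.const_smul s)
  have hmeas : ∀ s : ℝ, AEStronglyMeasurable
      (fun x => ‖Du x + s • Dv x‖ ^ (p - 2) * ⟪Du x + s • Dv x, Dw x⟫) μ := by
    intro s
    have h1 : AEStronglyMeasurable (fun x => ‖Du x + s • Dv x‖ ^ (p - 2)) μ :=
      (Real.continuous_rpow_const hq.le).comp_aestronglyMeasurable (haff s).norm
    have h2 : AEMeasurable (fun x => ⟪Du x + s • Dv x, Dw x⟫) μ :=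
      (haff s).aemeasurable.inner hDw.1.aemeasurable
    exact h1.mul h2.aestronglyMeasurable
  have hmeas' : AEStronglyMeasurable (fun x =>
      (p - 2) * (‖Du x + (0:ℝ) • Dv x‖ ^ (p - 2 - 2) * ⟪Du x + (0:ℝ) • Dv x, Dv x⟫
        * ⟪Du x + (0:ℝ) • Dv x, Dw x⟫)
      + ‖Du x + (0:ℝ) • Dv x‖ ^ (p - 2) * ⟪Dv x, Dw x⟫) μ := by
    have ha := (haff 0).aemeasurable
    have h1 : AEMeasurable (fun x => ‖Du x + (0:ℝ) • Dv x‖ ^ (p - 2 - 2)) μ :=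
      ((haff 0).norm.aemeasurable).pow aemeasurable_const
    have h2 : AEMeasurable (fun x => ⟪Du x + (0:ℝ) • Dv x, Dv x⟫) μ :=
      ha.inner hDv.1.aemeasurable
    have h3 : AEMeasurable (fun x => ⟪Du x + (0:ℝ) • Dv x, Dw x⟫) μ :=
      ha.inner hDw.1.aemeasurable
    have h4 : AEMeasurable (fun x => ‖Du x + (0:ℝ) • Dv x‖ ^ (p - 2)) μ :=
      ((haff 0).norm.aemeasurable).pow aemeasurable_const
    have h5 : AEMeasurable (fun x => ⟪Dv x, Dw x⟫) μ :=
      hDv.1.aemeasurable.inner hDw.1.aemeasurable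
    exact ((aemeasurable_const.mul ((h1.mul h2).mul h3)).add (h4.mul h5)).aestronglyMeasurable
  -- norm bounds for affine family
  have hyM : ∀ x, ∀ s : ℝ, |s| ≤ 1 → ‖Du x + s • Dv x‖ ≤ ‖Du x‖ + ‖Dv x‖ + ‖Dw x‖ := by
    intro x s hs
    have h1 : ‖Du x + s • Dv x‖ ≤ ‖Du x‖ + ‖s • Dv x‖ := norm_add_le _ _
    have h2 : ‖s • Dv x‖ = |s| * ‖Dv x‖ := by rw [norm_smul, Real.norm_eq_abs]
    have h3 : |s| * ‖Dv x‖ ≤ 1 * ‖Dv x‖ := mul_le_mul_of_nonneg_right hs (norm_nonneg _)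
    have := norm_nonneg (Dw x)
    linarith
  have hDvM : ∀ x, ‖Dv x‖ ≤ ‖Du x‖ + ‖Dv x‖ + ‖Dw x‖ := fun x => by
    nlinarith [norm_nonneg (Du x), norm_nonneg (Dw x)]
  have hDwM : ∀ x, ‖Dw x‖ ≤ ‖Du x‖ + ‖Dv x‖ + ‖Dw x‖ := fun x => by
    nlinarith [norm_nonneg (Du x), norm_nonneg (Dv x)]
  -- integrability at 0
  have hint0 : Integrable
      (fun x => ‖Du x + (0:ℝ) • Dv x‖ ^ (p - 2) * ⟪Du x + (0:ℝ) • Dv x, Dw x⟫) μ := by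
    refine Integrable.mono' hMp_int (hmeas 0) ?_
    filter_upwards with x
    set y := Du x + (0:ℝ) • Dv x with hy
    have h1 : ‖y‖ ≤ ‖Du x‖ + ‖Dv x‖ + ‖Dw x‖ := hyM x 0 (by norm_num)
    have h2 : ‖‖y‖ ^ (p - 2) * ⟪y, Dw x⟫‖ ≤ ‖y‖ ^ (p - 2) * ‖y‖ * ‖Dw x‖ := by
      rw [Real.norm_eq_abs, abs_mul, abs_of_nonneg (Real.rpow_nonneg (norm_nonneg _) _),
        mul_assoc]
      exact mul_le_mul_of_nonneg_left
        ((abs_real_inner_le_norm _ _)) (Real.rpow_nonneg (norm_nonneg _) _)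
    have h3 := rpow_prod_le (d := ‖Du x‖ + ‖Dv x‖ + ‖Dw x‖) hq.le (norm_nonneg y) h1
      (norm_nonneg y) h1 (norm_nonneg (Dw x)) (hDwM x)
    rw [show p - 2 + 2 = p by ring] at h3
    exact h2.trans h3
  -- bound
  have hbound : ∀ᵐ x ∂μ, ∀ s ∈ ball (0:ℝ) 1,
      ‖(p - 2) * (‖Du x + s • Dv x‖ ^ (p - 2 - 2) * ⟪Du x + s • Dv x, Dv x⟫
          * ⟪Du x + s • Dv x, Dw x⟫)
        + ‖Du x + s • Dv x‖ ^ (p - 2) * ⟪Dv x, Dw x⟫‖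
        ≤ (p - 1) * ((‖Du x‖ + ‖Dv x‖ + ‖Dw x‖) ^ p) := by
    filter_upwards with x s hs
    have hs1 : |s| ≤ 1 := by
      have := mem_ball_iff_norm.mp hs
      simp only [sub_zero, Real.norm_eq_abs] at this
      linarith
    set y := Du x + s • Dv x with hy
    have h1 : ‖y‖ ≤ ‖Du x‖ + ‖Dv x‖ + ‖Dw x‖ := hyM x s hs1
    have hT1 : |‖y‖ ^ (p - 2 - 2) * ⟪y, Dv x⟫ * ⟪y, Dw x⟫| ≤ ‖y‖ ^ (p - 2) * ‖Dv x‖ * ‖Dw x‖ :=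
      inner_prod_rpow_bound hq y (Dv x) (Dw x)
    have hT2 : |‖y‖ ^ (p - 2) * ⟪Dv x, Dw x⟫| ≤ ‖y‖ ^ (p - 2) * ‖Dv x‖ * ‖Dw x‖ := by
      rw [abs_mul, abs_of_nonneg (Real.rpow_nonneg (norm_nonneg _) _), mul_assoc]
      exact mul_le_mul_of_nonneg_left
        ((abs_real_inner_le_norm _ _)) (Real.rpow_nonneg (norm_nonneg _) _)
    have hprod := rpow_prod_le (d := ‖Du x‖ + ‖Dv x‖ + ‖Dw x‖) hq.le (norm_nonneg y) h1
      (norm_nonneg (Dv x)) (hDvM x) (norm_nonneg (Dw x)) (hDwM x)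
    rw [show p - 2 + 2 = p by ring] at hprod
    have habs : ‖(p - 2) * (‖y‖ ^ (p - 2 - 2) * ⟪y, Dv x⟫ * ⟪y, Dw x⟫)
        + ‖y‖ ^ (p - 2) * ⟪Dv x, Dw x⟫‖
        ≤ (p - 2) * |‖y‖ ^ (p - 2 - 2) * ⟪y, Dv x⟫ * ⟪y, Dw x⟫|
          + |‖y‖ ^ (p - 2) * ⟪Dv x, Dw x⟫| := by
      rw [Real.norm_eq_abs]
      refine (abs_add_le _ _).trans ?_
      rw [abs_mul, abs_of_nonneg (by linarith : (0:ℝ) ≤ p - 2)]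
    have := mul_le_mul_of_nonneg_left (hT1.trans hprod) (by linarith : (0:ℝ) ≤ p - 2)
    have := hT2.trans hprod
    nlinarith [habs]
  -- differentiability
  have hdiff : ∀ᵐ x ∂μ, ∀ s ∈ ball (0:ℝ) 1,
      HasDerivAt (fun s : ℝ => ‖Du x + s • Dv x‖ ^ (p - 2) * ⟪Du x + s • Dv x, Dw x⟫)
        ((p - 2) * (‖Du x + s • Dv x‖ ^ (p - 2 - 2) * ⟪Du x + s • Dv x, Dv x⟫
            * ⟪Du x + s • Dv x, Dw x⟫)
          + ‖Du x + s • Dv x‖ ^ (p - 2) * ⟪Dv x, Dw x⟫) s := by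
    filter_upwards with x s _
    exact hasDerivAt_norm_rpow_inner hq (Du x) (Dv x) (Dw x) s
  have key := (hasDerivAt_integral_of_dominated_loc_of_deriv_le
    (F := fun s x => ‖Du x + s • Dv x‖ ^ (p - 2) * ⟪Du x + s • Dv x, Dw x⟫)
    (F' := fun s x =>
      (p - 2) * (‖Du x + s • Dv x‖ ^ (p - 2 - 2) * ⟪Du x + s • Dv x, Dv x⟫
        * ⟪Du x + s • Dv x, Dw x⟫)
      + ‖Du x + s • Dv x‖ ^ (p - 2) * ⟪Dv x, Dw x⟫)
    (bound := fun x => (p - 1) * ((‖Du x‖ + ‖Dv x‖ + ‖Dw x‖) ^ p))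
    (ball_mem_nhds 0 one_pos) (Filter.Eventually.of_forall hmeas) hint0 hmeas' hbound
    (hMp_int.const_mul (p - 1)) hdiff).2
  -- identify the derivative value
  have hi1 : Integrable (fun x => ‖Du x‖ ^ (p - 4) * ⟪Du x, Dv x⟫ * ⟪Du x, Dw x⟫) μ := by
    refine Integrable.mono' hMp_int ?_ ?_
    · have h1 : AEMeasurable (fun x => ‖Du x‖ ^ (p - 4)) μ :=
        (hDu.1.norm.aemeasurable).pow aemeasurable_const
      have h2 : AEMeasurable (fun x => ⟪Du x, Dv x⟫) μ :=
        hDu.1.aemeasurable.inner hDv.1.aemeasurable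
      have h3 : AEMeasurable (fun x => ⟪Du x, Dw x⟫) μ :=
        hDu.1.aemeasurable.inner hDw.1.aemeasurable
      exact ((h1.mul h2).mul h3).aestronglyMeasurable
    · filter_upwards with x
      have hT1 := inner_prod_rpow_bound hq (Du x) (Dv x) (Dw x)
      rw [show p - 2 - 2 = p - 4 by ring] at hT1
      have hprod := rpow_prod_le (d := ‖Du x‖ + ‖Dv x‖ + ‖Dw x‖) hq.le (norm_nonneg (Du x))
        (by nlinarith [norm_nonneg (Dv x), norm_nonneg (Dw x)])
        (norm_nonneg (Dv x)) (hDvM x) (norm_nonneg (Dw x)) (hDwM x)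
      rw [show p - 2 + 2 = p by ring] at hprod
      exact (Real.norm_eq_abs _ ▸ hT1).trans hprod
  have hi2 : Integrable (fun x => ‖Du x‖ ^ (p - 2) * ⟪Dv x, Dw x⟫) μ := by
    refine Integrable.mono' hMp_int ?_ ?_
    · have h1 : AEMeasurable (fun x => ‖Du x‖ ^ (p - 2)) μ :=
        (hDu.1.norm.aemeasurable).pow aemeasurable_const
      have h2 : AEMeasurable (fun x => ⟪Dv x, Dw x⟫) μ :=
        hDv.1.aemeasurable.inner hDw.1.aemeasurable
      exact (h1.mul h2).aestronglyMeasurable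
    · filter_upwards with x
      have hT2 : |‖Du x‖ ^ (p - 2) * ⟪Dv x, Dw x⟫| ≤ ‖Du x‖ ^ (p - 2) * ‖Dv x‖ * ‖Dw x‖ := by
        rw [abs_mul, abs_of_nonneg (Real.rpow_nonneg (norm_nonneg _) _), mul_assoc]
        exact mul_le_mul_of_nonneg_left
          ((abs_real_inner_le_norm _ _)) (Real.rpow_nonneg (norm_nonneg _) _)
      have hprod := rpow_prod_le (d := ‖Du x‖ + ‖Dv x‖ + ‖Dw x‖) hq.le (norm_nonneg (Du x))
        (by nlinarith [norm_nonneg (Dv x), norm_nonneg (Dw x)])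
        (norm_nonneg (Dv x)) (hDvM x) (norm_nonneg (Dw x)) (hDwM x)
      rw [show p - 2 + 2 = p by ring] at hprod
      exact (Real.norm_eq_abs _ ▸ hT2).trans hprod
  refine key.congr_deriv ?_
  have hfun : (fun x =>
      (p - 2) * (‖Du x + (0:ℝ) • Dv x‖ ^ (p - 2 - 2) * ⟪Du x + (0:ℝ) • Dv x, Dv x⟫
        * ⟪Du x + (0:ℝ) • Dv x, Dw x⟫)
      + ‖Du x + (0:ℝ) • Dv x‖ ^ (p - 2) * ⟪Dv x, Dw x⟫)
      = fun x => (p - 2) * (‖Du x‖ ^ (p - 4) * ⟪Du x, Dv x⟫ * ⟪Du x, Dw x⟫)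
        + ‖Du x‖ ^ (p - 2) * ⟪Dv x, Dw x⟫ := by
    funext x
    rw [show p - 2 - 2 = p - 4 by ring]
    simp [zero_smul]
  rw [hfun, integral_add (hi1.const_mul (p - 2)) hi2, integral_const_mul]


/-- For `p ∈ (2,∞)` and `u, v, w ∈ W^{1,p}(Ω)` (with weak gradients `Du, Dv, Dw`),
the map `s ↦ 𝔞_{p,Ω}(u + s v, w)` has derivative `𝔟_{p,Ω}(u,v,w)` at `s = 0`. -/
theorem stmt3 {N : ℕ} (p : ℝ) (hp : 2 < p)
    (Ω : Set (EuclideanSpace ℝ (Fin N))) (hΩ : IsOpen Ω) (hΩb : Bornology.IsBounded Ω)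
    (u v w : EuclideanSpace ℝ (Fin N) → ℝ)
    (Du Dv Dw : EuclideanSpace ℝ (Fin N) → EuclideanSpace ℝ (Fin N))
    (hu : MemLp u (ENNReal.ofReal p) (volume.restrict Ω))
    (hv : MemLp v (ENNReal.ofReal p) (volume.restrict Ω))
    (hw : MemLp w (ENNReal.ofReal p) (volume.restrict Ω))
    (hDu : MemLp Du (ENNReal.ofReal p) (volume.restrict Ω))
    (hDv : MemLp Dv (ENNReal.ofReal p) (volume.restrict Ω))
    (hDw : MemLp Dw (ENNReal.ofReal p) (volume.restrict Ω)) :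
    HasDerivAt
      (fun s : ℝ =>
        (∫ x in Ω, |u x + s * v x| ^ (p - 2) * (u x + s * v x) * w x)
          + ∫ x in Ω, ‖Du x + s • Dv x‖ ^ (p - 2) * ⟪Du x + s • Dv x, Dw x⟫)
      ((p - 1) * (∫ x in Ω, |u x| ^ (p - 2) * v x * w x)
        + (p - 2) * (∫ x in Ω, ‖Du x‖ ^ (p - 4) * ⟪Du x, Dv x⟫ * ⟪Du x, Dw x⟫)
        + ∫ x in Ω, ‖Du x‖ ^ (p - 2) * ⟪Dv x, Dw x⟫) 0 := by
  have hd1 := part1 p hp Ω u v w hu hv hw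
  have hd2 := part2 p hp Ω Du Dv Dw hDu hDv hDw
  rw [add_assoc]
  exact hd1.add hd2
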